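/- arXiv:2009.01201 — 2 statements merged into one kernel-verified Lean document; each statement's English description precedes it below -/
import Mathlib

section
/- Writing v_D = (v_D', v_D'') with v_D' ∈ H₁ and v_D'' ∈ H₂, the following hold: Q v_D' = 0, A v_D' = v_D'', and ⟨q, -v_D'⟩ = -‖v_D‖², where ‖v_D‖² = ‖v_D'‖² + ‖v_D''‖². -/
open scoped InnerProductSpace Pointwise Classical
open Filter Topology

noncomputable section

variable {H₁ H₂ : Type*} [NormedAddCommGroup H₁] [InnerProductSpace ℝ H₁]
  [NormedAddCommGroup H₂] [InnerProductSpace ℝ H₂]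

/-- The effective domain of an extended-real-valued function. -/
def fdom {α : Type*} (f : α → EReal) : Set α := {x | f x ≠ ⊤}

/-- The indicator function of a set (0 on the set, `+∞` outside). -/
def indE {α : Type*} (s : Set α) (x : α) : EReal := if x ∈ s then 0 else ⊤

/-- The support function `σ_S(u) = sup_{x ∈ S} ⟪x, u⟫`. -/
def suppF {H : Type*} [NormedAddCommGroup H] [InnerProductSpace ℝ H]
    (s : Set H) (u : H) : EReal :=
  ⨆ x ∈ s, ((⟪x, u⟫_ℝ : ℝ) : EReal)

/-- The polar cone `S° = {u | ∀ x ∈ S, ⟪x, u⟫ ≤ 0}`. -/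
def polarCone {H : Type*} [NormedAddCommGroup H] [InnerProductSpace ℝ H]
    (s : Set H) : Set H := {u | ∀ x ∈ s, ⟪x, u⟫_ℝ ≤ 0}

/-- The recession cone `rec S = {x | ∀ y ∈ S, x + y ∈ S}`. -/
def recCone {H : Type*} [AddCommGroup H] (s : Set H) : Set H :=
  {x | ∀ y ∈ s, x + y ∈ s}

/-- `p` is the metric projection of `x` onto `S`, i.e. `p = P_S x`. -/
def IsProjOn {H : Type*} [NormedAddCommGroup H] [InnerProductSpace ℝ H]
    (S : Set H) (x p : H) : Prop := p ∈ S ∧ ∀ w ∈ S, dist x p ≤ dist x w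

/-- The Fenchel conjugate on the Hilbert product `H₁ × H₂` (with the ℓ²
inner product `⟪(z,y),(λ,μ)⟫ = ⟪z,λ⟫ + ⟪y,μ⟫`). -/
def pConj (f : H₁ × H₂ → EReal) : H₁ × H₂ → EReal :=
  fun u => ⨆ p : H₁ × H₂, ((⟪p.1, u.1⟫_ℝ + ⟪p.2, u.2⟫_ℝ : ℝ) : EReal) - f p

/-- `f(z, y) = ι_B(z) + ι_C(y)`. -/
def qpF (B : Set H₁) (C : Set H₂) : H₁ × H₂ → EReal :=
  fun p => indE B p.1 + indE C p.2

/-- `g(z, y) = ½⟪z, Qz⟫ + ⟪q, z⟫ + ι_{Az = y}(z, y)`. -/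
def qpG (Q : H₁ →L[ℝ] H₁) (q : H₁) (A : H₁ →L[ℝ] H₂) : H₁ × H₂ → EReal :=
  fun p => ((1 / 2 * ⟪p.1, Q p.1⟫_ℝ + ⟪q, p.1⟫_ℝ : ℝ) : EReal) +
    indE {r : H₁ × H₂ | A r.1 = r.2} p

/-- `v` is the element of minimum norm of `S ⊆ H₁ × H₂` with respect to the
Hilbert (ℓ²) product norm, i.e. `v = P_S 0`. -/
def IsMinNormPointP (S : Set (H₁ × H₂)) (v : H₁ × H₂) : Prop :=
  v ∈ S ∧ ∀ w ∈ S, ‖v.1‖ ^ 2 + ‖v.2‖ ^ 2 ≤ ‖w.1‖ ^ 2 + ‖w.2‖ ^ 2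

-- helper: iSup ≠ ⊤ iff real bound
lemma isup_ne_top_iff {ι : Sort*} (h : ι → EReal) :
    (⨆ i, h i) ≠ ⊤ ↔ ∃ M : ℝ, ∀ i, h i ≤ (M : EReal) := by
  constructor
  · intro hh
    exact ⟨(⨆ i, h i).toReal, fun i => (le_iSup h i).trans (EReal.le_coe_toReal hh)⟩
  · rintro ⟨M, hM⟩
    exact ne_top_of_le_ne_top (EReal.coe_ne_top M) (iSup_le hM)

-- characterization of dom f*
lemma memF_iff (B : Set H₁) (C : Set H₂) (a : H₁ × H₂) :
    a ∈ fdom (pConj (qpF B C)) ↔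
      ∃ M : ℝ, ∀ b ∈ B, ∀ c ∈ C, ⟪b, a.1⟫_ℝ + ⟪c, a.2⟫_ℝ ≤ M := by
  have hterm : ∀ p : H₁ × H₂,
      ((⟪p.1, a.1⟫_ℝ + ⟪p.2, a.2⟫_ℝ : ℝ) : EReal) - qpF B C p =
      if p.1 ∈ B ∧ p.2 ∈ C then ((⟪p.1, a.1⟫_ℝ + ⟪p.2, a.2⟫_ℝ : ℝ) : EReal) else ⊥ := by
    intro p
    by_cases h1 : p.1 ∈ B <;> by_cases h2 : p.2 ∈ C <;>
      simp [qpF, indE, h1, h2, EReal.sub_top]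
  rw [fdom, Set.mem_setOf_eq, pConj, isup_ne_top_iff]
  constructor
  · rintro ⟨M, hM⟩
    refine ⟨M, fun b hb c hc => ?_⟩
    have := hM (b, c)
    rw [hterm (b, c)] at this
    rw [if_pos ⟨hb, hc⟩] at this
    exact_mod_cast this
  · rintro ⟨M, hM⟩
    refine ⟨M, fun p => ?_⟩
    rw [hterm p]
    by_cases h : p.1 ∈ B ∧ p.2 ∈ C
    · rw [if_pos h]
      exact_mod_cast hM p.1 h.1 p.2 h.2
    · simp [h]

-- bound characterization of dom g*
lemma memG_iff_bdd (Q : H₁ →L[ℝ] H₁) (q : H₁) (A : H₁ →L[ℝ] H₂) (u : H₁ × H₂) :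
    u ∈ fdom (pConj (qpG Q q A)) ↔
      ∃ M : ℝ, ∀ z : H₁,
        ⟪z, u.1⟫_ℝ + ⟪A z, u.2⟫_ℝ - (1 / 2 * ⟪z, Q z⟫_ℝ + ⟪q, z⟫_ℝ) ≤ M := by
  have hterm : ∀ p : H₁ × H₂,
      ((⟪p.1, u.1⟫_ℝ + ⟪p.2, u.2⟫_ℝ : ℝ) : EReal) - qpG Q q A p =
      if A p.1 = p.2 then
        ((⟪p.1, u.1⟫_ℝ + ⟪p.2, u.2⟫_ℝ - (1 / 2 * ⟪p.1, Q p.1⟫_ℝ + ⟪q, p.1⟫_ℝ) : ℝ) : EReal)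
      else ⊥ := by
    intro p
    by_cases h : A p.1 = p.2
    · simp only [qpG, indE, Set.mem_setOf_eq, h, if_true, add_zero]
      rw [← EReal.coe_sub]
    · have ht : qpG Q q A p = ⊤ := by
        simp only [qpG, indE, Set.mem_setOf_eq, h, if_false]
        rw [show ((1 / 2 * ⟪p.1, Q p.1⟫_ℝ + ⟪q, p.1⟫_ℝ : ℝ) : EReal) + ⊤ = ⊤ from
          EReal.coe_add_top _]
      rw [ht, if_neg h, EReal.sub_top]
  rw [fdom, Set.mem_setOf_eq, pConj, isup_ne_top_iff]
  constructor
  · rintro ⟨M, hM⟩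
    refine ⟨M, fun z => ?_⟩
    have := hM (z, A z)
    rw [hterm (z, A z)] at this
    simp only [if_true] at this
    exact_mod_cast this
  · rintro ⟨M, hM⟩
    refine ⟨M, fun p => ?_⟩
    rw [hterm p]
    by_cases h : A p.1 = p.2
    · simp only [h, if_true]
      have := hM p.1
      rw [h] at this
      exact_mod_cast this
    · simp [h]

-- range characterization of dom g*
lemma memG_iff_range [FiniteDimensional ℝ H₁] [FiniteDimensional ℝ H₂]
    (Q : H₁ →L[ℝ] H₁) (hQsa : IsSelfAdjoint Q) (hQpos : ∀ z : H₁, 0 ≤ ⟪Q z, z⟫_ℝ)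
    (q : H₁) (A : H₁ →L[ℝ] H₂) (u : H₁ × H₂) :
    u ∈ fdom (pConj (qpG Q q A)) ↔
      ∃ z₀ : H₁, Q z₀ = u.1 + ContinuousLinearMap.adjoint A u.2 - q := by
  set r : H₁ := u.1 + ContinuousLinearMap.adjoint A u.2 - q with hr
  have key : ∀ z : H₁,
      ⟪z, u.1⟫_ℝ + ⟪A z, u.2⟫_ℝ - (1 / 2 * ⟪z, Q z⟫_ℝ + ⟪q, z⟫_ℝ) =
      ⟪z, r⟫_ℝ - 1 / 2 * ⟪z, Q z⟫_ℝ := by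
    intro z
    have h1 : ⟪A z, u.2⟫_ℝ = ⟪z, ContinuousLinearMap.adjoint A u.2⟫_ℝ :=
      (ContinuousLinearMap.adjoint_inner_right A z u.2).symm
    have h2 : ⟪q, z⟫_ℝ = ⟪z, q⟫_ℝ := (real_inner_comm q z).symm
    rw [hr, inner_sub_right, inner_add_right, h1, h2]; ring
  rw [memG_iff_bdd]
  constructor
  · rintro ⟨M, hM⟩
    have hM' : ∀ z : H₁, ⟪z, r⟫_ℝ - 1 / 2 * ⟪z, Q z⟫_ℝ ≤ M := fun z => by
      rw [← key z]; exact hM z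
    have hrK : r ∈ LinearMap.range (Q : H₁ →ₗ[ℝ] H₁) := by
      rw [← (LinearMap.range (Q : H₁ →ₗ[ℝ] H₁)).orthogonal_orthogonal]
      intro z hz
      -- z is orthogonal to the range of Q, hence Q z = 0
      have hQz : Q z = 0 := by
        have h0 : ⟪Q (Q z), z⟫_ℝ = 0 := hz (Q (Q z)) ⟨Q z, rfl⟩
        exact inner_self_eq_zero.mp ((hQsa.isSymmetric (Q z) z).symm.trans h0)
      -- conclude ⟪z, r⟫ = 0
      by_contra hc
      have hc' : ⟪z, r⟫_ℝ ≠ 0 := hc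
      have := hM' (((M + 1) / ⟪z, r⟫_ℝ) • z)
      rw [real_inner_smul_left, map_smul, inner_smul_left, inner_smul_right, hQz] at this
      simp only [RCLike.star_def, conj_trivial, inner_zero_right, mul_zero] at this
      rw [div_mul_cancel₀ _ hc'] at this
      linarith
    obtain ⟨z₀, hz₀⟩ := hrK
    exact ⟨z₀, hz₀⟩
  · rintro ⟨z₀, hz₀⟩
    refine ⟨1 / 2 * ⟪z₀, Q z₀⟫_ℝ, fun z => ?_⟩
    rw [key z, ← hz₀]
    have hpos := hQpos (z - z₀)
    have e1 : ⟪Q z, z₀⟫_ℝ = ⟪z, Q z₀⟫_ℝ := hQsa.isSymmetric z z₀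
    have e2 : ⟪Q z₀, z⟫_ℝ = ⟪z, Q z₀⟫_ℝ := real_inner_comm _ _
    have e3 : ⟪Q z, z⟫_ℝ = ⟪z, Q z⟫_ℝ := real_inner_comm _ _
    have e4 : ⟪Q z₀, z₀⟫_ℝ = ⟪z₀, Q z₀⟫_ℝ := real_inner_comm _ _
    rw [map_sub, inner_sub_left, inner_sub_right, inner_sub_right] at hpos
    linarith
-- variational inequality for the min-norm point of a convex set
lemma min_norm_variational {S : Set (H₁ × H₂)} (hS : Convex ℝ S) {v : H₁ × H₂}
    (hv : IsMinNormPointP S v) {w : H₁ × H₂} (hw : w ∈ S) :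
    ‖v.1‖ ^ 2 + ‖v.2‖ ^ 2 ≤ ⟪v.1, w.1⟫_ℝ + ⟪v.2, w.2⟫_ℝ := by
  obtain ⟨hvS, hmin⟩ := hv
  set c : ℝ := ⟪v.1, w.1 - v.1⟫_ℝ + ⟪v.2, w.2 - v.2⟫_ℝ with hc
  set e : ℝ := ‖w.1 - v.1‖ ^ 2 + ‖w.2 - v.2‖ ^ 2 with he
  have he0 : 0 ≤ e := by positivity
  have key : ∀ t : ℝ, 0 < t → t ≤ 1 → 0 ≤ 2 * t * c + t ^ 2 * e := by
    intro t ht0 ht1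
    have hu : (1 - t) • v + t • w ∈ S :=
      hS hvS hw (by linarith) (le_of_lt ht0) (by ring)
    have hrw : (1 - t) • v + t • w = (v.1 + t • (w.1 - v.1), v.2 + t • (w.2 - v.2)) := by
      ext <;> simp [Prod.smul_fst, Prod.smul_snd, smul_sub, sub_smul] <;> abel
    rw [hrw] at hu
    have := hmin _ hu
    simp only at this
    have n1 : ‖v.1 + t • (w.1 - v.1)‖ ^ 2 =
        ‖v.1‖ ^ 2 + 2 * (t * ⟪v.1, w.1 - v.1⟫_ℝ) + t ^ 2 * ‖w.1 - v.1‖ ^ 2 := by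
      rw [norm_add_sq_real, real_inner_smul_right, norm_smul]
      rw [Real.norm_eq_abs, mul_pow, sq_abs]
    have n2 : ‖v.2 + t • (w.2 - v.2)‖ ^ 2 =
        ‖v.2‖ ^ 2 + 2 * (t * ⟪v.2, w.2 - v.2⟫_ℝ) + t ^ 2 * ‖w.2 - v.2‖ ^ 2 := by
      rw [norm_add_sq_real, real_inner_smul_right, norm_smul]
      rw [Real.norm_eq_abs, mul_pow, sq_abs]
    rw [n1, n2] at this
    simp only [hc, he]
    nlinarith [this]
  have hc0 : 0 ≤ c := by
    by_contra hcneg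
    push_neg at hcneg
    set t : ℝ := min 1 ((-c) / (e + 1)) with ht
    have ht0 : 0 < t := lt_min one_pos (div_pos (by linarith) (by positivity))
    have ht1 : t ≤ 1 := min_le_left _ _
    have hte : t * (e + 1) ≤ -c := by
      rw [← le_div_iff₀ (by positivity)]
      exact min_le_right _ _
    have := key t ht0 ht1
    nlinarith [this, ht0, hte]
  have e1 : ⟪v.1, w.1 - v.1⟫_ℝ = ⟪v.1, w.1⟫_ℝ - ‖v.1‖ ^ 2 := by
    rw [inner_sub_right, real_inner_self_eq_norm_sq]
  have e2 : ⟪v.2, w.2 - v.2⟫_ℝ = ⟪v.2, w.2⟫_ℝ - ‖v.2‖ ^ 2 := by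
    rw [inner_sub_right, real_inner_self_eq_norm_sq]
  rw [hc, e1, e2] at hc0
  linarith

lemma Fconvex (B : Set H₁) (C : Set H₂) : Convex ℝ (fdom (pConj (qpF B C))) := by
  intro a ha a' ha' θ σ hθ hσ hθσ
  rw [memF_iff] at ha ha' ⊢
  obtain ⟨M, hM⟩ := ha
  obtain ⟨M', hM'⟩ := ha'
  refine ⟨θ * M + σ * M', fun b hb c hc => ?_⟩
  have h1 := hM b hb c hc
  have h2 := hM' b hb c hc
  simp only [Prod.smul_fst, Prod.smul_snd, Prod.fst_add, Prod.snd_add,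
    inner_add_right, real_inner_smul_right]
  nlinarith [mul_le_mul_of_nonneg_left h1 hθ, mul_le_mul_of_nonneg_left h2 hσ]

lemma Gconvex [FiniteDimensional ℝ H₁] [FiniteDimensional ℝ H₂]
    (Q : H₁ →L[ℝ] H₁) (hQsa : IsSelfAdjoint Q) (hQpos : ∀ z : H₁, 0 ≤ ⟪Q z, z⟫_ℝ)
    (q : H₁) (A : H₁ →L[ℝ] H₂) : Convex ℝ (fdom (pConj (qpG Q q A))) := by
  intro u hu u' hu' θ σ hθ hσ hθσ
  rw [memG_iff_range Q hQsa hQpos] at hu hu' ⊢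
  obtain ⟨z₀, hz₀⟩ := hu
  obtain ⟨z₀', hz₀'⟩ := hu'
  refine ⟨θ • z₀ + σ • z₀', ?_⟩
  have hq : q = (θ + σ) • q := by rw [hθσ, one_smul]
  simp only [map_add, map_smul, hz₀, hz₀', Prod.smul_fst, Prod.smul_snd,
    Prod.fst_add, Prod.snd_add]
  conv_rhs => rw [hq]
  module
theorem vD_certificate_properties {H₁ H₂ : Type*}
    [NormedAddCommGroup H₁] [InnerProductSpace ℝ H₁] [FiniteDimensional ℝ H₁]
    [NormedAddCommGroup H₂] [InnerProductSpace ℝ H₂] [FiniteDimensional ℝ H₂]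
    (Q : H₁ →L[ℝ] H₁) (hQsa : IsSelfAdjoint Q) (hQpos : ∀ z : H₁, 0 ≤ ⟪Q z, z⟫_ℝ)
    (q : H₁) (A : H₁ →L[ℝ] H₂)
    (B : Set H₁) (hBne : B.Nonempty) (hBcl : IsClosed B) (hBcv : Convex ℝ B)
    (C : Set H₂) (hCne : C.Nonempty) (hCcl : IsClosed C) (hCcv : Convex ℝ C)
    (vD : H₁ × H₂)
    (hvD : IsMinNormPointP (closure (fdom (pConj (qpF B C)) + fdom (pConj (qpG Q q A)))) vD)
    : Q vD.1 = 0 ∧ A vD.1 = vD.2 ∧ ⟪q, -vD.1⟫_ℝ = -(‖vD.1‖ ^ 2 + ‖vD.2‖ ^ 2) := by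
  classical
  set F := fdom (pConj (qpF B C)) with hF
  set G := fdom (pConj (qpG Q q A)) with hG
  have hvS : vD ∈ closure (F + G) := hvD.1
  have hSc : Convex ℝ (closure (F + G)) :=
    ((Fconvex B C).add (Gconvex Q hQsa hQpos q A)).closure
  have hvar : ∀ w ∈ closure (F + G),
      ‖vD.1‖ ^ 2 + ‖vD.2‖ ^ 2 ≤ ⟪vD.1, w.1⟫_ℝ + ⟪vD.2, w.2⟫_ℝ :=
    fun w hw => min_norm_variational hSc hvD hw
  -- translations in the G-direction
  have hGtrans : ∀ u ∈ G, ∀ (z : H₁) (μ : H₂),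
      u + (Q z - ContinuousLinearMap.adjoint A μ, μ) ∈ G := by
    intro u hu z μ
    rw [hG, memG_iff_range Q hQsa hQpos] at hu ⊢
    obtain ⟨z₀, hz₀⟩ := hu
    refine ⟨z₀ + z, ?_⟩
    simp only [map_add, Prod.fst_add, Prod.snd_add, hz₀]
    abel
  have hStrans : ∀ (z : H₁) (μ : H₂),
      vD + (Q z - ContinuousLinearMap.adjoint A μ, μ) ∈ closure (F + G) := by
    intro z μ
    set d : H₁ × H₂ := (Q z - ContinuousLinearMap.adjoint A μ, μ) with hd
    apply map_mem_closure (continuous_add_right d) hvS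
    rintro x hx
    rw [Set.mem_add] at hx ⊢
    obtain ⟨a, ha, u, hu, rfl⟩ := hx
    exact ⟨a, ha, u + d, hGtrans u hu z μ, (add_assoc a u d).symm⟩
  have hperp : ∀ (z : H₁) (μ : H₂),
      ⟪vD.1, Q z - ContinuousLinearMap.adjoint A μ⟫_ℝ + ⟪vD.2, μ⟫_ℝ = 0 := by
    intro z μ
    have h1 := hvar _ (hStrans z μ)
    have h2 := hvar _ (hStrans (-z) (-μ))
    simp only [Prod.fst_add, Prod.snd_add, inner_add_right, inner_sub_right,
      inner_neg_right, map_neg, real_inner_self_eq_norm_sq] at h1 h2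
    rw [inner_sub_right]
    linarith
  have hQv : Q vD.1 = 0 := by
    have hz : ∀ z : H₁, ⟪vD.1, Q z⟫_ℝ = 0 := by
      intro z
      have := hperp z 0
      simpa using this
    have h0 : ⟪Q vD.1, Q vD.1⟫_ℝ = 0 :=
      (hQsa.isSymmetric vD.1 (Q vD.1)).trans (hz (Q vD.1))
    exact inner_self_eq_zero.mp h0
  have hAv : A vD.1 = vD.2 := by
    have hμ : ∀ μ : H₂, ⟪vD.2 - A vD.1, μ⟫_ℝ = 0 := by
      intro μ
      have := hperp 0 μ
      rw [inner_sub_left]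
      have hadj : ⟪vD.1, ContinuousLinearMap.adjoint A μ⟫_ℝ = ⟪A vD.1, μ⟫_ℝ :=
        ContinuousLinearMap.adjoint_inner_right A vD.1 μ
      simp only [map_zero, zero_sub, inner_neg_right, hadj] at this
      linarith
    have h0 := hμ (vD.2 - A vD.1)
    rw [inner_self_eq_zero, sub_eq_zero] at h0
    exact h0.symm
  -- the point (q, 0) belongs to F + G
  have hF0 : ((0 : H₁), (0 : H₂)) ∈ F := by
    rw [hF, memF_iff]
    exact ⟨0, fun b hb c hc => by simp⟩
  have hGq : ((q : H₁), (0 : H₂)) ∈ G := by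
    rw [hG, memG_iff_range Q hQsa hQpos]
    exact ⟨0, by simp⟩
  have hq0S : ((q, 0) : H₁ × H₂) ∈ closure (F + G) := by
    apply subset_closure
    rw [Set.mem_add]
    exact ⟨(0, 0), hF0, (q, 0), hGq, by simp⟩
  have hub : ‖vD.1‖ ^ 2 + ‖vD.2‖ ^ 2 ≤ ⟪vD.1, q⟫_ℝ := by
    have := hvar _ hq0S
    simpa using this
  -- lower bound via the closure
  have hFpos : ∀ a ∈ F, 0 ≤ ⟪vD.1, a.1⟫_ℝ + ⟪vD.2, a.2⟫_ℝ := by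
    intro a ha
    have haS : vD + a ∈ closure (F + G) := by
      apply map_mem_closure (continuous_add_right a) hvS
      rintro x hx
      rw [Set.mem_add] at hx ⊢
      obtain ⟨a', ha', u, hu, rfl⟩ := hx
      refine ⟨a' + a, ?_, u, hu, add_right_comm a' a u⟩
      rw [hF, memF_iff] at ha ha' ⊢
      obtain ⟨M, hM⟩ := ha
      obtain ⟨M', hM'⟩ := ha'
      refine ⟨M' + M, fun b hb c hc' => ?_⟩
      have h1 := hM b hb c hc'
      have h2 := hM' b hb c hc'
      simp only [Prod.fst_add, Prod.snd_add, inner_add_right]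
      linarith
    have := hvar _ haS
    simp only [Prod.fst_add, Prod.snd_add, inner_add_right,
      real_inner_self_eq_norm_sq] at this
    linarith
  have hGip : ∀ u ∈ G, ⟪vD.1, u.1⟫_ℝ + ⟪vD.2, u.2⟫_ℝ = ⟪vD.1, q⟫_ℝ := by
    intro u hu
    rw [hG, memG_iff_range Q hQsa hQpos] at hu
    obtain ⟨z₀, hz₀⟩ := hu
    have hu1 : u.1 = Q z₀ + q - ContinuousLinearMap.adjoint A u.2 := by
      rw [hz₀]; abel
    have e1 : ⟪vD.1, Q z₀⟫_ℝ = 0 := by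
      have h0 : ⟪Q vD.1, z₀⟫_ℝ = 0 := by rw [hQv, inner_zero_left]
      exact (hQsa.isSymmetric vD.1 z₀).symm.trans h0
    have e2 : ⟪vD.1, ContinuousLinearMap.adjoint A u.2⟫_ℝ = ⟪vD.2, u.2⟫_ℝ := by
      rw [ContinuousLinearMap.adjoint_inner_right, hAv]
    rw [hu1, inner_sub_right, inner_add_right, e1, e2]
    ring
  have hlb : ⟪vD.1, q⟫_ℝ ≤ ‖vD.1‖ ^ 2 + ‖vD.2‖ ^ 2 := by
    have hcl : closure (F + G) ⊆
        {w : H₁ × H₂ | ⟪vD.1, q⟫_ℝ ≤ ⟪vD.1, w.1⟫_ℝ + ⟪vD.2, w.2⟫_ℝ} := by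
      apply closure_minimal
      · rintro x hx
        rw [Set.mem_add] at hx
        obtain ⟨a, ha, u, hu, rfl⟩ := hx
        simp only [Set.mem_setOf_eq, Prod.fst_add, Prod.snd_add, inner_add_right]
        have h1 := hFpos a ha
        have h2 := hGip u hu
        linarith
      · exact isClosed_le continuous_const
          ((continuous_const.inner continuous_fst).add
            (continuous_const.inner continuous_snd))
    have := hcl hvS
    simp only [Set.mem_setOf_eq, real_inner_self_eq_norm_sq] at this
    exact this
  refine ⟨hQv, hAv, ?_⟩
  have hqv : ⟪vD.1, q⟫_ℝ = ‖vD.1‖ ^ 2 + ‖vD.2‖ ^ 2 := le_antisymm hlb hub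
  rw [inner_neg_right, real_inner_comm, hqv]

end
end

section
/- Writing v_P = (v_P', v_P'') with v_P' ∈ H₁ and v_P'' ∈ H₂, the following hold: v_P' + A* v_P'' = 0 and σ_B(-v_P') + σ_C(-v_P'') = -‖v_P‖², where ‖v_P‖² = ‖v_P'‖² + ‖v_P''‖² and σ_D is the support function of D. -/
open scoped InnerProductSpace Pointwise Classical
open Filter Topology

noncomputable section

variable {H₁ H₂ : Type*} [NormedAddCommGroup H₁] [InnerProductSpace ℝ H₁]
  [NormedAddCommGroup H₂] [InnerProductSpace ℝ H₂]

/-! ### Auxiliary lemmas -/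

lemma fdom_qpF_aux (B : Set H₁) (C : Set H₂) : fdom (qpF B C) = B ×ˢ C := by
  ext p
  simp only [fdom, qpF, indE, Set.mem_setOf_eq, Set.mem_prod]
  split <;> split <;> simp_all

lemma fdom_qpG_aux (Q : H₁ →L[ℝ] H₁) (q : H₁) (A : H₁ →L[ℝ] H₂) :
    fdom (qpG Q q A) = {r : H₁ × H₂ | A r.1 = r.2} := by
  ext p
  simp only [fdom, qpG, indE, Set.mem_setOf_eq]
  split <;> simp_all [← EReal.coe_add]

lemma suppF_eq_csSup_aux {H : Type*} [NormedAddCommGroup H] [InnerProductSpace ℝ H]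
    (s : Set H) (u : H) (hne : s.Nonempty) (hbdd : BddAbove ((fun x => ⟪x, u⟫_ℝ) '' s)) :
    suppF s u = ((sSup ((fun x => ⟪x, u⟫_ℝ) '' s) : ℝ) : EReal) := by
  unfold suppF
  set T := ⨆ x ∈ s, ((⟪x, u⟫_ℝ : ℝ) : EReal) with hT
  apply le_antisymm
  · apply iSup₂_le
    intro x hx
    exact_mod_cast le_csSup hbdd (Set.mem_image_of_mem _ hx)
  · obtain ⟨x₀, hx₀⟩ := hne
    have hbot : ((⟪x₀, u⟫_ℝ : ℝ) : EReal) ≤ T :=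
      le_iSup₂ (f := fun x _ => ((⟪x, u⟫_ℝ : ℝ) : EReal)) x₀ hx₀
    have hTtop : T ≤ ((sSup ((fun x => ⟪x, u⟫_ℝ) '' s) : ℝ) : EReal) := by
      apply iSup₂_le
      intro x hx
      exact_mod_cast le_csSup hbdd (Set.mem_image_of_mem _ hx)
    have hTnebot : T ≠ ⊥ := fun h => by simp [h] at hbot
    have hTnetop : T ≠ ⊤ := fun h => by simp [h] at hTtop
    lift T to ℝ using ⟨hTnetop, hTnebot⟩ with t ht
    norm_cast
    apply csSup_le (Set.Nonempty.image _ ⟨x₀, hx₀⟩)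
    rintro r ⟨x, hx, rfl⟩
    have := le_iSup₂ (f := fun x _ => ((⟪x, u⟫_ℝ : ℝ) : EReal)) x hx
    rw [← hT] at this
    exact_mod_cast this

lemma key_var_aux {K : Set (H₁ × H₂)} (hKcv : Convex ℝ K) {v : H₁ × H₂} (hvK : v ∈ K)
    (hmin : ∀ w ∈ K, ‖v.1‖ ^ 2 + ‖v.2‖ ^ 2 ≤ ‖w.1‖ ^ 2 + ‖w.2‖ ^ 2)
    {w : H₁ × H₂} (hw : w ∈ K) :
    ‖v.1‖ ^ 2 + ‖v.2‖ ^ 2 ≤ ⟪v.1, w.1⟫_ℝ + ⟪v.2, w.2⟫_ℝ := by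
  set a : ℝ := ⟪v.1, w.1 - v.1⟫_ℝ + ⟪v.2, w.2 - v.2⟫_ℝ with ha
  set b : ℝ := ‖w.1 - v.1‖ ^ 2 + ‖w.2 - v.2‖ ^ 2 with hb
  have hbnn : 0 ≤ b := by positivity
  have hstep : ∀ t : ℝ, 0 < t → t ≤ 1 → 0 ≤ 2 * a + t * b := by
    intro t ht ht1
    have hmem : (1 - t) • v + t • w ∈ K := hKcv hvK hw (by linarith) ht.le (by ring)
    have := hmin _ hmem
    have e1 : ((1 - t) • v + t • w).1 = v.1 + t • (w.1 - v.1) := by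
      simp [Prod.smul_fst, smul_sub, sub_smul]; module
    have e2 : ((1 - t) • v + t • w).2 = v.2 + t • (w.2 - v.2) := by
      simp [Prod.smul_snd, smul_sub, sub_smul]; module
    rw [e1, e2] at this
    have n1 : ‖v.1 + t • (w.1 - v.1)‖ ^ 2
        = ‖v.1‖ ^ 2 + 2 * (t * ⟪v.1, w.1 - v.1⟫_ℝ) + t ^ 2 * ‖w.1 - v.1‖ ^ 2 := by
      rw [norm_add_sq_real, real_inner_smul_right, norm_smul]
      simp [mul_pow, abs_of_pos ht]
    have n2 : ‖v.2 + t • (w.2 - v.2)‖ ^ 2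
        = ‖v.2‖ ^ 2 + 2 * (t * ⟪v.2, w.2 - v.2⟫_ℝ) + t ^ 2 * ‖w.2 - v.2‖ ^ 2 := by
      rw [norm_add_sq_real, real_inner_smul_right, norm_smul]
      simp [mul_pow, abs_of_pos ht]
    rw [n1, n2] at this
    nlinarith [this]
  have hA : 0 ≤ a := by
    by_contra hneg
    push_neg at hneg
    rcases eq_or_lt_of_le hbnn with hb0 | hbpos
    · have := hstep 1 one_pos le_rfl
      rw [← hb0] at this; linarith
    · set t : ℝ := min 1 (-a / b) with htdef
      have htpos : 0 < t := lt_min one_pos (div_pos (by linarith) hbpos)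
      have ht1 : t ≤ 1 := min_le_left _ _
      have htb : t * b ≤ -a := by
        have : t ≤ -a / b := min_le_right _ _
        calc t * b ≤ (-a / b) * b := by nlinarith
        _ = -a := by field_simp
      have := hstep t htpos ht1
      linarith
  have expand : a = ⟪v.1, w.1⟫_ℝ + ⟪v.2, w.2⟫_ℝ - (‖v.1‖ ^ 2 + ‖v.2‖ ^ 2) := by
    simp [ha, inner_sub_right, real_inner_self_eq_norm_sq]
    ring
  linarith [expand ▸ hA]

theorem vP_certificate_properties {H₁ H₂ : Type*}
    [NormedAddCommGroup H₁] [InnerProductSpace ℝ H₁] [FiniteDimensional ℝ H₁]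
    [NormedAddCommGroup H₂] [InnerProductSpace ℝ H₂] [FiniteDimensional ℝ H₂]
    (Q : H₁ →L[ℝ] H₁) (hQsa : IsSelfAdjoint Q) (hQpos : ∀ z : H₁, 0 ≤ ⟪Q z, z⟫_ℝ)
    (q : H₁) (A : H₁ →L[ℝ] H₂)
    (B : Set H₁) (hBne : B.Nonempty) (hBcl : IsClosed B) (hBcv : Convex ℝ B)
    (C : Set H₂) (hCne : C.Nonempty) (hCcl : IsClosed C) (hCcv : Convex ℝ C)
    (vP : H₁ × H₂) (hvP : IsMinNormPointP (closure (fdom (qpF B C) - fdom (qpG Q q A))) vP)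
    : vP.1 + (ContinuousLinearMap.adjoint A) vP.2 = 0 ∧
      suppF B (-vP.1) + suppF C (-vP.2) = ((-(‖vP.1‖ ^ 2 + ‖vP.2‖ ^ 2) : ℝ) : EReal) := by
  obtain ⟨hvmem, hvmin⟩ := hvP
  set F : Set (H₁ × H₂) := fdom (qpF B C) with hF
  set G : Set (H₁ × H₂) := fdom (qpG Q q A) with hG
  have hFeq : F = B ×ˢ C := fdom_qpF_aux B C
  have hGeq : G = {r : H₁ × H₂ | A r.1 = r.2} := fdom_qpG_aux Q q A
  set K : Set (H₁ × H₂) := closure (F - G) with hK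
  -- convexity
  have hGcv : Convex ℝ G := by
    rw [hGeq]
    intro x hx y hy a b hha hhb hab
    simp only [Set.mem_setOf_eq] at hx hy ⊢
    simp [hx, hy, Prod.smul_fst, Prod.smul_snd]
  have hFcv : Convex ℝ F := by rw [hFeq]; exact hBcv.prod hCcv
  have hKcv : Convex ℝ K := (hFcv.sub hGcv).closure
  set N : ℝ := ‖vP.1‖ ^ 2 + ‖vP.2‖ ^ 2 with hN
  -- the membership lemma
  have hmemK : ∀ b ∈ B, ∀ c ∈ C, ∀ z : H₁, ((b - z, c - A z) : H₁ × H₂) ∈ K := by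
    intro b hb c hc z
    apply subset_closure
    have h1 : ((b, c) : H₁ × H₂) ∈ F := by rw [hFeq]; exact ⟨hb, hc⟩
    have h2 : ((z, A z) : H₁ × H₂) ∈ G := by rw [hGeq]; simp
    exact Set.sub_mem_sub h1 h2
  -- key variational inequality
  have hkey : ∀ w ∈ K, N ≤ ⟪vP.1, w.1⟫_ℝ + ⟪vP.2, w.2⟫_ℝ := fun w hw =>
    key_var_aux hKcv hvmem hvmin hw
  obtain ⟨b₀, hb₀⟩ := hBne
  obtain ⟨c₀, hc₀⟩ := hCne
  -- Claim 1
  set u : H₁ := vP.1 + (ContinuousLinearMap.adjoint A) vP.2 with hu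
  have claim1 : u = 0 := by
    by_contra hune
    have hupos : 0 < ‖u‖ ^ 2 := by
      have := norm_pos_iff.mpr hune
      positivity
    set C₀ : ℝ := ⟪vP.1, b₀⟫_ℝ + ⟪vP.2, c₀⟫_ℝ with hC₀
    have hsall : ∀ s : ℝ, N ≤ C₀ - s * ‖u‖ ^ 2 := by
      intro s
      have hk := hkey _ (hmemK b₀ hb₀ c₀ hc₀ (s • u))
      simp only [inner_sub_right, map_smul] at hk
      have hcomb : ⟪vP.1, s • u⟫_ℝ + ⟪vP.2, s • A u⟫_ℝ = s * ‖u‖ ^ 2 := by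
        rw [real_inner_smul_right, real_inner_smul_right,
          ← ContinuousLinearMap.adjoint_inner_left, ← mul_add, ← inner_add_left, ← hu,
          real_inner_self_eq_norm_sq]
      rw [hC₀]
      linarith
    have := hsall ((C₀ - N) / ‖u‖ ^ 2 + 1)
    rw [add_mul, div_mul_cancel₀ _ (ne_of_gt hupos), one_mul] at this
    linarith
  -- Claim 2: set up real suprema
  have hAzero : A 0 = 0 := map_zero A
  have hbc : ∀ b ∈ B, ∀ c ∈ C, ⟪b, -vP.1⟫_ℝ + ⟪c, -vP.2⟫_ℝ ≤ -N := by
    intro b hb c hc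
    have := hkey _ (hmemK b hb c hc 0)
    simp only [sub_zero, hAzero] at this
    simp only [inner_neg_right]
    have e1 : ⟪b, vP.1⟫_ℝ = ⟪vP.1, b⟫_ℝ := real_inner_comm _ _
    have e2 : ⟪c, vP.2⟫_ℝ = ⟪vP.2, c⟫_ℝ := real_inner_comm _ _
    linarith
  have hbddB : BddAbove ((fun x => ⟪x, -vP.1⟫_ℝ) '' B) := by
    refine ⟨-N - ⟪c₀, -vP.2⟫_ℝ, ?_⟩
    rintro r ⟨b, hb, rfl⟩
    have := hbc b hb c₀ hc₀
    simp only; linarith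
  have hbddC : BddAbove ((fun x => ⟪x, -vP.2⟫_ℝ) '' C) := by
    refine ⟨-N - ⟪b₀, -vP.1⟫_ℝ, ?_⟩
    rintro r ⟨c, hc, rfl⟩
    have := hbc b₀ hb₀ c hc
    simp only; linarith
  set sB : ℝ := sSup ((fun x => ⟪x, -vP.1⟫_ℝ) '' B) with hsB
  set sC : ℝ := sSup ((fun x => ⟪x, -vP.2⟫_ℝ) '' C) with hsC
  have hle : sB + sC ≤ -N := by
    have h1 : ∀ b ∈ B, sC ≤ -N - ⟪b, -vP.1⟫_ℝ := by
      intro b hb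
      apply csSup_le (Set.Nonempty.image _ ⟨c₀, hc₀⟩)
      rintro r ⟨c, hc, rfl⟩
      have := hbc b hb c hc
      simp only; linarith
    have h2 : sB ≤ -N - sC := by
      apply csSup_le (Set.Nonempty.image _ ⟨b₀, hb₀⟩)
      rintro r ⟨b, hb, rfl⟩
      have := h1 b hb
      simp only; linarith
    linarith
  -- lower bound via continuity
  have hge : -N ≤ sB + sC := by
    set φ : H₁ × H₂ → ℝ := fun w => ⟪vP.1, w.1⟫_ℝ + ⟪vP.2, w.2⟫_ℝ with hφ
    have hφcont : Continuous φ := by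
      apply Continuous.add
      · exact (continuous_const.inner continuous_fst)
      · exact (continuous_const.inner continuous_snd)
    have hclosed : IsClosed {w : H₁ × H₂ | -(sB + sC) ≤ φ w} :=
      isClosed_le continuous_const hφcont
    have hsubset : F - G ⊆ {w : H₁ × H₂ | -(sB + sC) ≤ φ w} := by
      rintro w hw
      rw [Set.mem_sub] at hw
      obtain ⟨f, hf, g, hg, rfl⟩ := hw
      rw [hFeq] at hf
      rw [hGeq] at hg
      obtain ⟨hf1, hf2⟩ := hf
      have hginner : ⟪vP.1, g.1⟫_ℝ + ⟪vP.2, g.2⟫_ℝ = 0 := by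
        have : g.2 = A g.1 := hg.symm
        rw [this, ← ContinuousLinearMap.adjoint_inner_left, ← inner_add_left, ← hu, claim1]
        simp
      have hb1 : ⟪f.1, -vP.1⟫_ℝ ≤ sB := le_csSup hbddB (Set.mem_image_of_mem _ hf1)
      have hb2 : ⟪f.2, -vP.2⟫_ℝ ≤ sC := le_csSup hbddC (Set.mem_image_of_mem _ hf2)
      simp only [Set.mem_setOf_eq, hφ, Prod.fst_sub, Prod.snd_sub, inner_sub_right]
      rw [inner_neg_right] at hb1 hb2
      have e1 : ⟪f.1, vP.1⟫_ℝ = ⟪vP.1, f.1⟫_ℝ := real_inner_comm _ _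
      have e2 : ⟪f.2, vP.2⟫_ℝ = ⟪vP.2, f.2⟫_ℝ := real_inner_comm _ _
      linarith
    have hvPin : vP ∈ {w : H₁ × H₂ | -(sB + sC) ≤ φ w} :=
      closure_minimal hsubset hclosed hvmem
    have hφv : φ vP = N := by
      simp only [hφ, hN, real_inner_self_eq_norm_sq]
    rw [Set.mem_setOf_eq, hφv] at hvPin
    linarith
  have hsum : sB + sC = -N := le_antisymm hle hge
  refine ⟨claim1, ?_⟩
  rw [suppF_eq_csSup_aux B (-vP.1) ⟨b₀, hb₀⟩ hbddB, suppF_eq_csSup_aux C (-vP.2) ⟨c₀, hc₀⟩ hbddC]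
  rw [← hsB, ← hsC]
  norm_cast

end
end
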